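/- Let p : X → Y be an R-quotient mapping between Tychonoff spaces X and Y. If X is an Ascoli space, then Y is an Ascoli space. -/

import Mathlib

open Set Filter Topology

/-- A set `H` of continuous real-valued functions is equicontinuous. -/
def EquicontinuousSet {X : Type*} [TopologicalSpace X] (H : Set C(X, ℝ)) : Prop :=
  ∀ x : X, ∀ ε : ℝ, 0 < ε → ∃ U ∈ 𝓝 x, ∀ x' ∈ U, ∀ f ∈ H, |f x' - f x| < ε

/-- `X` is Ascoli: every compact subset of `C_k(X)` is equicontinuous. -/
def AscoliSpace (X : Type*) [TopologicalSpace X] : Prop :=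
  ∀ K : Set C(X, ℝ), IsCompact K → EquicontinuousSet K

/-- `X` is sequentially Ascoli: every convergent sequence in `C_k(X)` is equicontinuous. -/
def SeqAscoliSpace (X : Type*) [TopologicalSpace X] : Prop :=
  ∀ (f : ℕ → C(X, ℝ)) (g : C(X, ℝ)), Tendsto f atTop (𝓝 g) →
    EquicontinuousSet (Set.range f ∪ {g})

/-- A function is `k`-continuous if its restriction to every compact subset is continuous. -/
def KContinuous {X Y : Type*} [TopologicalSpace X] [TopologicalSpace Y] (f : X → Y) : Prop :=
  ∀ K : Set X, IsCompact K → ContinuousOn f K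

/-- `X` is a `k_ℝ`-space if every `k`-continuous real-valued function is continuous. -/
def KRSpace (X : Type*) [TopologicalSpace X] : Prop :=
  ∀ f : X → ℝ, KContinuous f → Continuous f

/-- `X` is an `s_ℝ`-space if every sequentially continuous real-valued function is continuous. -/
def SRSpace (X : Type*) [TopologicalSpace X] : Prop :=
  ∀ f : X → ℝ, SeqContinuous f → Continuous f

/-- A function on a product is separately continuous. -/
def SeparatelyContinuous {X K : Type*} [TopologicalSpace X] [TopologicalSpace K]
    (Φ : X × K → ℝ) : Prop :=
  (∀ x : X, Continuous fun k => Φ (x, k)) ∧ (∀ k : K, Continuous fun x => Φ (x, k))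

/-- `X` is pseudocompact: every continuous real-valued function on `X` is bounded. -/
def Pseudocompact (X : Type*) [TopologicalSpace X] : Prop :=
  ∀ f : X → ℝ, Continuous f → ∃ M : ℝ, ∀ x : X, |f x| ≤ M

/-- A subset `A` of `X` is functionally bounded if every continuous real-valued
function on `X` is bounded on `A`. -/
def FunctionallyBounded {X : Type*} [TopologicalSpace X] (A : Set X) : Prop :=
  ∀ f : X → ℝ, Continuous f → ∃ M : ℝ, ∀ a ∈ A, |f a| ≤ M

/-- An `R`-quotient map: a continuous surjection such that real-valued functions on the
codomain are continuous as soon as their composition with the map is continuous. -/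
def RQuotientMap {X Y : Type*} [TopologicalSpace X] [TopologicalSpace Y] (p : X → Y) : Prop :=
  Continuous p ∧ Function.Surjective p ∧ ∀ φ : Y → ℝ, Continuous (φ ∘ p) → Continuous φ

private lemma csSup_image_min_le {Y : Type*} [TopologicalSpace Y] (K : Set C(Y, ℝ))
    (hne : K.Nonempty) (y₀ y1 y2 : Y) (ε c : ℝ)
    (h : ∀ f ∈ K, |f y1 - f y2| ≤ c) :
    sSup ((fun f : C(Y, ℝ) => min |f y1 - f y₀| ε) '' K)
      ≤ sSup ((fun f : C(Y, ℝ) => min |f y2 - f y₀| ε) '' K) + c := by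
  apply csSup_le (hne.image _)
  rintro a ⟨f, hf, rfl⟩
  have hb : |f y1 - f y₀| ≤ |f y2 - f y₀| + c := by
    have h1 := h f hf
    have h2 := abs_sub_le (f y1) (f y2) (f y₀)
    linarith
  have hc : (0:ℝ) ≤ c := le_trans (abs_nonneg _) (h f hf)
  have hmin : min |f y1 - f y₀| ε ≤ min |f y2 - f y₀| ε + c := by
    rcases le_total |f y2 - f y₀| ε with h1 | h1
    · calc min |f y1 - f y₀| ε ≤ |f y1 - f y₀| := min_le_left _ _
        _ ≤ |f y2 - f y₀| + c := hb
        _ = min |f y2 - f y₀| ε + c := by rw [min_eq_left h1]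
    · calc min |f y1 - f y₀| ε ≤ ε := min_le_right _ _
        _ ≤ ε + c := by linarith
        _ = min |f y2 - f y₀| ε + c := by rw [min_eq_right h1]
  refine hmin.trans (add_le_add ?_ le_rfl)
  exact le_csSup ⟨ε, by rintro b ⟨g, hg, rfl⟩; exact min_le_right _ _⟩ ⟨f, hf, rfl⟩

theorem ascoli_of_rQuotient {X Y : Type*} [TopologicalSpace X] [T35Space X]
    [TopologicalSpace Y] [T35Space Y] (p : X → Y) (hp : RQuotientMap p)
    (hX : AscoliSpace X) : AscoliSpace Y := by
  intro K hK y₀ ε hε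
  rcases K.eq_empty_or_nonempty with rfl | hne
  · exact ⟨Set.univ, Filter.univ_mem, by simp⟩
  set pm : C(X, Y) := ⟨p, hp.1⟩ with hpm
  have hHc : IsCompact ((fun f : C(Y, ℝ) => f.comp pm) '' K) :=
    hK.image (ContinuousMap.continuous_precomp pm)
  have heq := hX _ hHc
  have hbdd : ∀ y : Y, BddAbove ((fun f : C(Y, ℝ) => min |f y - f y₀| ε) '' K) := by
    intro y
    exact ⟨ε, by rintro b ⟨g, hg, rfl⟩; exact min_le_right _ _⟩
  set φ : Y → ℝ := fun y => sSup ((fun f : C(Y, ℝ) => min |f y - f y₀| ε) '' K) with hφdef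
  have hφp : Continuous (φ ∘ p) := by
    rw [continuous_iff_continuousAt]
    intro x
    rw [ContinuousAt, Metric.tendsto_nhds]
    intro δ hδ
    obtain ⟨U, hU, hUe⟩ := heq x (δ / 2) (by linarith)
    filter_upwards [hU] with x' hx'
    have key : ∀ f ∈ K, |f (p x') - f (p x)| ≤ δ / 2 := fun f hf =>
      (hUe x' hx' (f.comp pm) ⟨f, hf, rfl⟩).le
    have h1 := csSup_image_min_le K hne y₀ (p x') (p x) ε (δ / 2) key
    have h2 := csSup_image_min_le K hne y₀ (p x) (p x') ε (δ / 2)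
      (fun f hf => by rw [abs_sub_comm]; exact key f hf)
    rw [Real.dist_eq]
    simp only [Function.comp_apply, hφdef]
    rw [abs_sub_lt_iff]
    constructor <;> linarith
  have hφc : Continuous φ := hp.2.2 φ hφp
  have hφ0 : φ y₀ = 0 := by
    have himg : (fun f : C(Y, ℝ) => min |f y₀ - f y₀| ε) '' K = {0} := by
      have : ∀ f : C(Y, ℝ), min |f y₀ - f y₀| ε = 0 := fun f => by
        simp [hε.le]
      simp only [this]
      exact hne.image_const 0
    rw [hφdef]
    simp only [himg, csSup_singleton]
  refine ⟨φ ⁻¹' Set.Iio ε, (hφc.isOpen_preimage _ isOpen_Iio).mem_nhds (by simp [hφ0, hε]), ?_⟩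
  intro y' hy' f hf
  have hle : min |f y' - f y₀| ε ≤ φ y' := le_csSup (hbdd y') ⟨f, hf, rfl⟩
  have hlt : min |f y' - f y₀| ε < ε := lt_of_le_of_lt hle hy'
  by_contra h
  push_neg at h
  rw [min_eq_right h] at hlt
  exact lt_irrefl _ hlt
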